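/- Let E be a finite-dimensional real normed vector space, Ω ⊆ E a nonempty bounded open convex set, and d_Ω its Hilbert metric. Let c₁, c₂ : ℝ → Ω be straight geodesics of speed 1 such that, as t → +∞, both c₁(t) and c₂(t) converge to a common boundary point ξ in the frontier of Ω, while as t → −∞, c₁(t) → a₁ and c₂(t) → a₂ with a₁ ≠ a₂, and c₁(0) ≠ c₂(0). Assume ξ is a smooth boundary point, i.e. there is a unique affine hyperplane H of E with ξ ∈ H and H ∩ Ω = ∅. Assume moreover that there exists a point p ∈ H lying both on the affine line through a₁ and a₂ and on the affine line through c₁(0) and c₂(0). Then d_Ω(c₁(t), c₂(t)) → 0 as t → +∞. (The strong stable manifold statement: Proposition 5.1(2) / the δ = 0 case of Lemma 5.3, expressed in an affine chart.) -/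

import Mathlib

open Filter Metric Set
set_option linter.unusedSectionVars false
set_option linter.unusedVariables false
set_option maxHeartbeats 1000000

/-- `H` is an affine hyperplane of `E`, i.e. a level set of a nonzero linear functional. -/
def IsAffineHyperplane {E : Type*} [NormedAddCommGroup E] [NormedSpace ℝ E]
    (H : Set E) : Prop :=
  ∃ (φ : E →ₗ[ℝ] ℝ) (cst : ℝ), φ ≠ 0 ∧ H = {y | φ y = cst}

section Aux
variable {E : Type*} [NormedAddCommGroup E] [NormedSpace ℝ E] [FiniteDimensional ℝ E]

/-- Structure of the intersection of a line with a bounded open convex set. -/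
lemma lineStruct (Ω : Set E) (hbd : Bornology.IsBounded Ω) (hop : IsOpen Ω)
    (hconv : Convex ℝ Ω) (x : E) (hx : x ∈ Ω) (v : E) (hv : v ≠ 0) :
    ∃ m M : ℝ, m < 0 ∧ 0 < M ∧ (∀ e : ℝ, x + e • v ∈ Ω ↔ e ∈ Set.Ioo m M) ∧
      x + m • v ∈ frontier Ω ∧ x + M • v ∈ frontier Ω := by
  classical
  set S : Set ℝ := {e | x + e • v ∈ Ω} with hS
  have hcont : Continuous fun e : ℝ => x + e • v := by continuity
  have hSopen : IsOpen S := hop.preimage hcont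
  have h0 : (0:ℝ) ∈ S := by simp [hS, hx]
  have hSne : S.Nonempty := ⟨0, h0⟩
  have hSconv : Convex ℝ S := by
    have hset : S = (AffineMap.lineMap x (x+v) : ℝ →ᵃ[ℝ] E) ⁻¹' Ω := by
      ext e
      simp only [Set.mem_preimage, AffineMap.lineMap_apply, vsub_eq_sub, vadd_eq_add,
        add_sub_cancel_left, hS, Set.mem_setOf_eq]
      rw [add_comm]
    rw [hset]
    exact hconv.affine_preimage _
  obtain ⟨R, hR⟩ := hbd.subset_closedBall x
  have hSbdd : ∀ e ∈ S, |e| ≤ R / ‖v‖ := by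
    intro e he
    have h1 : x + e • v ∈ closedBall x R := hR he
    have h2 : ‖e • v‖ ≤ R := by
      have h3 := mem_closedBall_iff_norm.mp h1
      simpa using h3
    rw [norm_smul, Real.norm_eq_abs] at h2
    rw [le_div_iff₀ (norm_pos_iff.mpr hv)]
    exact h2
  have hbddAbove : BddAbove S := ⟨R/‖v‖, fun e he => le_trans (le_abs_self e) (hSbdd e he)⟩
  have hbddBelow : BddBelow S :=
    ⟨-(R/‖v‖), fun e he => neg_le_of_abs_le (hSbdd e he)⟩
  set m := sInf S with hm
  set M := sSup S with hM
  have hmem_lt : ∀ e ∈ S, m < e ∧ e < M := by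
    intro e he
    obtain ⟨ε, hε, hball⟩ := Metric.isOpen_iff.mp hSopen e he
    have h₁ : e - ε/2 ∈ S := by
      apply hball
      rw [mem_ball, Real.dist_eq]
      rw [abs_of_nonpos (by linarith)]
      linarith
    have h₂ : e + ε/2 ∈ S := by
      apply hball
      rw [mem_ball, Real.dist_eq]
      rw [abs_of_nonneg (by linarith)]
      linarith
    constructor
    · exact lt_of_le_of_lt (csInf_le hbddBelow h₁) (by linarith)
    · exact lt_of_lt_of_le (by linarith) (le_csSup hbddAbove h₂)
  have hIff : ∀ e : ℝ, x + e • v ∈ Ω ↔ e ∈ Set.Ioo m M := by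
    intro e
    constructor
    · intro he
      exact ⟨(hmem_lt e he).1, (hmem_lt e he).2⟩
    · rintro ⟨h₁, h₂⟩
      obtain ⟨a, haS, hae⟩ := exists_lt_of_csInf_lt hSne h₁
      obtain ⟨b, hbS, hbe⟩ := exists_lt_of_lt_csSup hSne h₂
      exact hSconv.ordConnected.out haS hbS ⟨hae.le, hbe.le⟩
  have hm0 : m < 0 := (hmem_lt 0 h0).1
  have hM0 : 0 < M := (hmem_lt 0 h0).2
  have hmM : m < M := lt_trans hm0 hM0
  have hfr : ∀ e : ℝ, e ∈ Set.Icc m M → e ∉ Set.Ioo m M → x + e • v ∈ frontier Ω := by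
    intro e hecc heoo
    rw [hop.frontier_eq, Set.mem_diff]
    constructor
    · have hcl : e ∈ closure (Set.Ioo m M) := by
        rw [closure_Ioo hmM.ne]; exact hecc
      exact map_mem_closure (f := fun e : ℝ => x + e • v) hcont hcl (fun a ha => (hIff a).mpr ha)
    · intro hmem
      exact heoo ((hIff e).mp hmem)
  exact ⟨m, M, hm0, hM0, hIff,
    hfr m ⟨le_refl m, hmM.le⟩ (fun h => lt_irrefl m h.1),
    hfr M ⟨hmM.le, le_refl M⟩ (fun h => lt_irrefl M h.2)⟩


lemma dformula (Ω : Set E) (d : E → E → ℝ)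
    (hd : ∀ x ∈ Ω, ∀ y ∈ Ω, x ≠ y → ∀ a ∈ frontier Ω, ∀ b ∈ frontier Ω,
      (∃ s > (0 : ℝ), a = x + s • (x - y)) → (∃ t > (0 : ℝ), b = y + t • (y - x)) →
      d x y = (1 / 2) * Real.log ((‖y - a‖ * ‖x - b‖) / (‖x - a‖ * ‖y - b‖)))
    {x y : E} (hx : x ∈ Ω) (hy : y ∈ Ω) (hxy : x ≠ y)
    {sa sb : ℝ} (hsa : 0 < sa) (hsb : 0 < sb)
    (haf : x + sa • (x - y) ∈ frontier Ω) (hbf : y + sb • (y - x) ∈ frontier Ω) :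
    d x y = (1 / 2) * Real.log ((1+sa)*(1+sb)/(sa*sb)) := by
  have h := hd x hx y hy hxy _ haf _ hbf ⟨sa, hsa, rfl⟩ ⟨sb, hsb, rfl⟩
  rw [h]
  congr 1
  have hxy0 : ‖x - y‖ ≠ 0 := by
    simpa [sub_eq_zero] using hxy
  have e1 : y - (x + sa • (x - y)) = -((1+sa) • (x - y)) := by module
  have e2 : x - (y + sb • (y - x)) = (1+sb) • (x - y) := by module
  have e3 : x - (x + sa • (x - y)) = -(sa • (x - y)) := by module
  have e4 : y - (y + sb • (y - x)) = sb • (x - y) := by module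
  rw [e1, e2, e3, e4, norm_neg, norm_neg, norm_smul, norm_smul, norm_smul, norm_smul,
    Real.norm_eq_abs, Real.norm_eq_abs, Real.norm_eq_abs, Real.norm_eq_abs,
    abs_of_pos hsa, abs_of_pos hsb, abs_of_pos (by linarith : (0:ℝ) < 1+sa),
    abs_of_pos (by linarith : (0:ℝ) < 1+sb)]
  congr 1
  have hn : (0:ℝ) < ‖x - y‖ := lt_of_le_of_ne (norm_nonneg _) (Ne.symm hxy0)
  rw [div_eq_div_iff (by positivity) (by positivity)]
  ring

lemma rigid (F : ℝ → ℝ) (h : ∀ s t : ℝ, |F s - F t| = 2 * |s - t|) :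
    (∀ t, F t = F 0 + 2*t) ∨ (∀ t, F t = F 0 - 2*t) := by
  have key : ∀ t, F t - F 0 = 2*t ∨ F t - F 0 = -(2*t) := by
    intro t
    have h1 := h t 0
    rw [sub_zero] at h1
    have h2 : |F t - F 0| = |2*t| := by rw [h1, abs_mul]; norm_num
    exact abs_eq_abs.mp h2
  by_cases h1 : F 1 - F 0 = 2
  · left
    intro t
    rcases key t with hk | hk
    · linarith
    · have h3 := h 1 t
      have h4 : F 1 - F t = 2 + 2*t := by linarith
      rw [h4] at h3
      have h5 : |2+2*t| = |2*(1-t)| := by rw [h3, abs_mul]; norm_num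
      have h6 := abs_eq_abs.mp h5
      have ht0 : t = 0 := by rcases h6 with h6 | h6 <;> linarith
      rw [ht0]; norm_num
  · right
    have h1' : F 1 - F 0 = -2 := by
      rcases key 1 with hk | hk
      · exfalso; apply h1; linarith
      · linarith
    intro t
    rcases key t with hk | hk
    · have h3 := h 1 t
      have h4 : F 1 - F t = -2 - 2*t := by linarith
      rw [h4] at h3
      have h5 : |-2-2*t| = |2*(1-t)| := by rw [h3, abs_mul]; norm_num
      have h6 := abs_eq_abs.mp h5
      have ht0 : t = 0 := by rcases h6 with h6 | h6 <;> linarith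
      rw [ht0]; norm_num
    · linarith


lemma sigma_pos (C : ℝ) (hC : 0 < C) (t : ℝ) : 0 < (1 + C * Real.exp (2*t))⁻¹ := by
  have := Real.exp_pos (2*t); positivity

lemma sigma_tendsto (C : ℝ) (hC : 0 < C) :
    Tendsto (fun t : ℝ => (1 + C * Real.exp (2*t))⁻¹) atTop (nhds 0) := by
  apply Tendsto.inv_tendsto_atTop
  apply tendsto_atTop_add_const_left
  apply Tendsto.const_mul_atTop hC
  exact Real.tendsto_exp_atTop.comp (tendsto_id.const_mul_atTop two_pos)

lemma sigma_tendsto_bot (C : ℝ) (hC : 0 < C) :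
    Tendsto (fun t : ℝ => (1 + C * Real.exp (2*t))⁻¹) atBot (nhds 1) := by
  have h2 : Tendsto (fun t : ℝ => Real.exp (2*t)) atBot (nhds 0) :=
    Real.tendsto_exp_atBot.comp (tendsto_id.const_mul_atBot two_pos)
  have h3 : Tendsto (fun t : ℝ => 1 + C * Real.exp (2*t)) atBot (nhds 1) := by
    have := (h2.const_mul C).const_add 1
    simpa using this
  have h4 := h3.inv₀ one_ne_zero
  simpa using h4

lemma chordLemma (Ω : Set E) (hbd : Bornology.IsBounded Ω) (hop : IsOpen Ω)
    (hconv : Convex ℝ Ω)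
    (d : E → E → ℝ) (hd0 : ∀ x ∈ Ω, d x x = 0)
    (hd : ∀ x ∈ Ω, ∀ y ∈ Ω, x ≠ y → ∀ a ∈ frontier Ω, ∀ b ∈ frontier Ω,
      (∃ s > (0 : ℝ), a = x + s • (x - y)) → (∃ t > (0 : ℝ), b = y + t • (y - x)) →
      d x y = (1 / 2) * Real.log ((‖y - a‖ * ‖x - b‖) / (‖x - a‖ * ‖y - b‖)))
    (c : ℝ → E) (hcΩ : ∀ t, c t ∈ Ω)
    (hline : ∃ p q : E, ∀ t : ℝ, ∃ r : ℝ, c t = p + r • q)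
    (hgeo : ∀ s t : ℝ, d (c s) (c t) = |s - t|)
    (ξ a : E) (hlim : Tendsto c atTop (nhds ξ)) (hlim' : Tendsto c atBot (nhds a)) :
    ∃ C : ℝ, 0 < C ∧ a ∈ frontier Ω ∧ a ≠ ξ ∧
      (∀ σ : ℝ, σ ∈ Set.Ioo (0:ℝ) 1 → ξ + σ • (a - ξ) ∈ Ω) ∧
      ∀ t, c t = ξ + (1 + C * Real.exp (2*t))⁻¹ • (a - ξ) := by
  classical
  obtain ⟨p₀, q₀, hpq⟩ := hline
  choose f hf using hpq
  have hinj : ∀ s t : ℝ, c s = c t → s = t := by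
    intro s t hst
    have h1 := hgeo s t
    rw [hst, hd0 _ (hcΩ t)] at h1
    have h2 := abs_eq_zero.mp h1.symm
    linarith [abs_eq_zero.mp h1.symm, sub_eq_zero.mp (abs_eq_zero.mp h1.symm)]
  have hq : q₀ ≠ 0 := by
    intro h
    have : c 0 = c 1 := by rw [hf 0, hf 1, h, smul_zero, smul_zero]
    have := hinj 0 1 this
    norm_num at this
  have : Nontrivial E := ⟨⟨q₀, 0, hq⟩⟩
  set z₀ := c 0 with hz₀
  obtain ⟨ψ₀, hψ₀norm, hψ₀q⟩ := exists_dual_vector ℝ q₀ (norm_ne_zero_iff.mpr hq)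
  set ψ : E →L[ℝ] ℝ := ‖q₀‖⁻¹ • ψ₀ with hψ
  have hψq : ψ q₀ = 1 := by
    rw [hψ]
    simp only [ContinuousLinearMap.smul_apply, hψ₀q, smul_eq_mul, RCLike.ofReal_real_eq_id,
      id_eq]
    exact inv_mul_cancel₀ (norm_ne_zero_iff.mpr hq)
  set g : ℝ → ℝ := fun t => ψ (c t - z₀) with hg
  have hrep : ∀ t, c t = z₀ + g t • q₀ := by
    intro t
    have h1 : c t - z₀ = (f t - f 0) • q₀ := by rw [hf t, hz₀, hf 0]; module
    have h2 : g t = f t - f 0 := by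
      rw [hg]; simp only
      rw [h1, map_smul, hψq, smul_eq_mul, mul_one]
    rw [h2, ← h1]; abel
  obtain ⟨m, M, hm0, hM0, hIff, hmf, hMf⟩ :=
    lineStruct Ω hbd hop hconv z₀ (hcΩ 0) q₀ hq
  have hmM : m < M := lt_trans hm0 hM0
  have hgmem : ∀ t, g t ∈ Set.Ioo m M := fun t =>
    (hIff (g t)).mp (by rw [← hrep t]; exact hcΩ t)
  set G : ℝ → ℝ := fun t => Real.log ((g t - m)/(M - g t)) with hG
  -- the log cross-ratio identity
  have hiso : ∀ s t : ℝ, g s < g t → G t - G s = 2 * |s - t| := by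
    intro s t hst
    have hxy : c s ≠ c t := by
      intro h
      have : g s = g t := by rw [hg]; simp only [h]
      linarith
    have hms : m < g s := (hgmem s).1
    have hMs : g s < M := (hgmem s).2
    have hmt : m < g t := (hgmem t).1
    have hMt : g t < M := (hgmem t).2
    have hst' : (0:ℝ) < g t - g s := by linarith
    set sa : ℝ := (g s - m)/(g t - g s) with hsa_def
    set sb : ℝ := (M - g t)/(g t - g s) with hsb_def
    have hsa : 0 < sa := div_pos (by linarith) hst'
    have hsb : 0 < sb := div_pos (by linarith) hst'
    have hne : g t - g s ≠ 0 := hst'.ne'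
    have ha : c s + sa • (c s - c t) = z₀ + m • q₀ := by
      rw [hrep s, hrep t]
      match_scalars
      · ring
      · rw [hsa_def]; field_simp; ring
    have hb : c t + sb • (c t - c s) = z₀ + M • q₀ := by
      rw [hrep s, hrep t]
      match_scalars
      · ring
      · rw [hsb_def]; field_simp; ring
    have haf : c s + sa • (c s - c t) ∈ frontier Ω := by rw [ha]; exact hmf
    have hbf : c t + sb • (c t - c s) ∈ frontier Ω := by rw [hb]; exact hMf
    have hdval := dformula Ω d hd (hcΩ s) (hcΩ t) hxy hsa hsb haf hbf
    have hgeo' := hgeo s t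
    rw [hdval] at hgeo'
    have hratio : (1+sa)*(1+sb)/(sa*sb)
        = ((g t - m)*(M - g s))/((g s - m)*(M - g t)) := by
      rw [hsa_def, hsb_def]
      field_simp
      try ring
    have p1 : (0:ℝ) < g t - m := by linarith
    have p2 : (0:ℝ) < M - g s := by linarith
    have p3 : (0:ℝ) < g s - m := by linarith
    have p4 : (0:ℝ) < M - g t := by linarith
    have hGdiff : Real.log (((g t - m)*(M - g s))/((g s - m)*(M - g t))) = G t - G s := by
      rw [hG]
      simp only
      rw [Real.log_div (mul_pos p1 p2).ne' (mul_pos p3 p4).ne',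
          Real.log_mul p1.ne' p2.ne', Real.log_mul p3.ne' p4.ne',
          Real.log_div p1.ne' p4.ne', Real.log_div p3.ne' p2.ne']
      ring
    rw [hratio, hGdiff] at hgeo'
    linarith [hgeo']
  have hIso : ∀ s t : ℝ, |G s - G t| = 2 * |s - t| := by
    intro s t
    rcases lt_trichotomy (g s) (g t) with h | h | h
    · have h1 := hiso s t h
      rw [abs_sub_comm, h1, abs_of_nonneg (by positivity)]
    · have hc : c s = c t := by rw [hrep s, hrep t, h]
      have hst := hinj s t hc
      rw [hst]
      simp
    · have h1 := hiso t s h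
      rw [h1, abs_of_nonneg (by positivity), abs_sub_comm]
  rcases rigid G hIso with hpl | hmi
  · -- case G t = G 0 + 2t :  g increases to M, so ξ = z₀ + M q₀, a = z₀ + m q₀
    set κ := Real.exp (G 0) with hκdef
    have hκ : 0 < κ := Real.exp_pos _
    have hsolve : ∀ t, M - g t = (M - m) * (1 + κ * Real.exp (2*t))⁻¹ := by
      intro t
      have hms : m < g t := (hgmem t).1
      have hMt : g t < M := (hgmem t).2
      have h1 : Real.exp (G t) = (g t - m)/(M - g t) :=
        Real.exp_log (div_pos (by linarith) (by linarith))
      have h2 : Real.exp (G t) = κ * Real.exp (2*t) := by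
        rw [hpl t, Real.exp_add, hκdef]
      have h4 : (g t - m)/(M - g t) = κ * Real.exp (2*t) := by rw [← h1, h2]
      rw [div_eq_iff (by linarith : M - g t ≠ 0)] at h4
      have hE : (0:ℝ) < 1 + κ * Real.exp (2*t) := by
        have := Real.exp_pos (2*t); positivity
      rw [eq_comm, mul_inv_eq_iff_eq_mul₀ hE.ne']
      linear_combination h4
    have hD : Tendsto (fun t => (M-m) * (1 + κ * Real.exp (2*t))⁻¹) atTop (nhds 0) := by
      have := (sigma_tendsto κ hκ).const_mul (M-m)
      simpa using this
    have hD' : Tendsto (fun t => (M-m) * (1 + κ * Real.exp (2*t))⁻¹) atBot (nhds (M-m)) := by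
      have := (sigma_tendsto_bot κ hκ).const_mul (M-m)
      simpa using this
    have hceq : ∀ t, c t = (z₀ + M • q₀) - ((M-m) * (1 + κ * Real.exp (2*t))⁻¹) • q₀ := by
      intro t
      rw [hrep t, ← hsolve t]
      module
    have hcto : Tendsto c atTop (nhds (z₀ + M • q₀)) := by
      rw [tendsto_congr hceq]
      have := tendsto_const_nhds (x := z₀ + M • q₀) (f := atTop (α := ℝ)) |>.sub
        (hD.smul_const q₀)
      simpa using this
    have hcbo : Tendsto c atBot (nhds ((z₀ + M • q₀) - (M - m) • q₀)) := by
      rw [tendsto_congr hceq]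
      exact tendsto_const_nhds.sub (hD'.smul_const q₀)
    have hξeq : ξ = z₀ + M • q₀ := tendsto_nhds_unique hlim hcto
    have haeq : a = z₀ + m • q₀ := by
      have := tendsto_nhds_unique hlim' hcbo
      rw [this]; module
    have haξ : a - ξ = (m - M) • q₀ := by rw [hξeq, haeq]; module
    refine ⟨κ, hκ, by rw [haeq]; exact hmf, ?_, ?_, ?_⟩
    · rw [haeq, hξeq]
      intro h
      have : (m - M) • q₀ = (0:E) := by
        have := sub_eq_zero.mpr h
        rw [← this]; module
      rcases smul_eq_zero.mp this with h' | h'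
      · have : m = M := by linarith [sub_eq_zero.mp h']
        linarith
      · exact hq h'
    · intro σ hσ
      have : ξ + σ • (a - ξ) = z₀ + (M + σ * (m - M)) • q₀ := by
        rw [haξ, hξeq]; module
      rw [this, hIff]
      constructor
      · nlinarith [hσ.1, hσ.2]
      · nlinarith [hσ.1, hσ.2]
    · intro t
      rw [hceq t, haξ, hξeq]
      match_scalars
      · ring
      · ring
  · -- case G t = G 0 - 2t : g decreases to m, so ξ = z₀ + m q₀, a = z₀ + M q₀
    set κ := Real.exp (-G 0) with hκdef
    have hκ : 0 < κ := Real.exp_pos _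
    have hsolve : ∀ t, g t - m = (M - m) * (1 + κ * Real.exp (2*t))⁻¹ := by
      intro t
      have hms : m < g t := (hgmem t).1
      have hMt : g t < M := (hgmem t).2
      have h1 : Real.exp (-G t) = (M - g t)/(g t - m) := by
        rw [hG]
        simp only
        rw [Real.exp_neg, Real.exp_log (div_pos (by linarith) (by linarith))]
        rw [inv_div]
      have h2 : Real.exp (-G t) = κ * Real.exp (2*t) := by
        rw [hmi t, hκdef, ← Real.exp_add]
        congr 1
        ring
      have h4 : (M - g t)/(g t - m) = κ * Real.exp (2*t) := by rw [← h1, h2]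
      rw [div_eq_iff (by linarith : g t - m ≠ 0)] at h4
      have hE : (0:ℝ) < 1 + κ * Real.exp (2*t) := by
        have := Real.exp_pos (2*t); positivity
      rw [eq_comm, mul_inv_eq_iff_eq_mul₀ hE.ne']
      linear_combination h4
    have hD : Tendsto (fun t => (M-m) * (1 + κ * Real.exp (2*t))⁻¹) atTop (nhds 0) := by
      have := (sigma_tendsto κ hκ).const_mul (M-m)
      simpa using this
    have hD' : Tendsto (fun t => (M-m) * (1 + κ * Real.exp (2*t))⁻¹) atBot (nhds (M-m)) := by
      have := (sigma_tendsto_bot κ hκ).const_mul (M-m)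
      simpa using this
    have hceq : ∀ t, c t = (z₀ + m • q₀) + ((M-m) * (1 + κ * Real.exp (2*t))⁻¹) • q₀ := by
      intro t
      rw [hrep t, ← hsolve t]
      module
    have hcto : Tendsto c atTop (nhds (z₀ + m • q₀)) := by
      rw [tendsto_congr hceq]
      have := tendsto_const_nhds (x := z₀ + m • q₀) (f := atTop (α := ℝ)) |>.add
        (hD.smul_const q₀)
      simpa using this
    have hcbo : Tendsto c atBot (nhds ((z₀ + m • q₀) + (M - m) • q₀)) := by
      rw [tendsto_congr hceq]
      exact tendsto_const_nhds.add (hD'.smul_const q₀)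
    have hξeq : ξ = z₀ + m • q₀ := tendsto_nhds_unique hlim hcto
    have haeq : a = z₀ + M • q₀ := by
      have := tendsto_nhds_unique hlim' hcbo
      rw [this]; module
    have haξ : a - ξ = (M - m) • q₀ := by rw [hξeq, haeq]; module
    refine ⟨κ, hκ, by rw [haeq]; exact hMf, ?_, ?_, ?_⟩
    · rw [haeq, hξeq]
      intro h
      have : (M - m) • q₀ = (0:E) := by
        have := sub_eq_zero.mpr h
        rw [← this]; module
      rcases smul_eq_zero.mp this with h' | h'
      · have : m = M := by linarith [sub_eq_zero.mp h']
        linarith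
      · exact hq h'
    · intro σ hσ
      have : ξ + σ • (a - ξ) = z₀ + (m + σ * (M - m)) • q₀ := by
        rw [haξ, hξeq]; module
      rw [this, hIff]
      constructor
      · nlinarith [hσ.1, hσ.2]
      · nlinarith [hσ.1, hσ.2]
    · intro t
      rw [hceq t, haξ, hξeq]
      match_scalars
      · ring
      · ring



lemma flatLemma (Ω : Set E) (hop : IsOpen Ω) (hconv : Convex ℝ Ω)
    (x₀ : E) (hx₀ : x₀ ∈ Ω)
    (φ : E →ₗ[ℝ] ℝ) (cst : ℝ) (hpos : ∀ z ∈ Ω, cst < φ z)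
    (ξ : E) (hξ : ξ ∈ frontier Ω) (hφξ : φ ξ = cst)
    (huniq : ∀ H' : Set E, IsAffineHyperplane H' → ξ ∈ H' → H' ∩ Ω = ∅ →
      H' = {y : E | φ y = cst})
    (c : ℝ) (hc : 0 < c) (z : ℕ → E) (hzf : ∀ n, z n ∈ frontier Ω)
    (hzlim : Tendsto z atTop (nhds ξ)) (hzne : ∀ n, z n ≠ ξ)
    (hzlow : ∀ n, c * ‖z n - ξ‖ ≤ φ (z n) - cst) : False := by
  classical
  have hφcont : Continuous φ := φ.continuous_of_finiteDimensional
  have hξcl : ξ ∈ closure Ω := hξ.1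
  have hξnΩ : ξ ∉ Ω := by
    intro h
    exact hξ.2 (by rwa [hop.interior_eq])
  set v : ℕ → E := fun n => ‖z n - ξ‖⁻¹ • (z n - ξ) with hv
  have hznorm : ∀ n, (0:ℝ) < ‖z n - ξ‖ := fun n =>
    norm_pos_iff.mpr (sub_ne_zero.mpr (hzne n))
  have hvs : ∀ n, v n ∈ sphere (0:E) 1 := by
    intro n
    rw [mem_sphere_zero_iff_norm, hv]
    simp only [norm_smul, norm_inv, norm_norm]
    exact inv_mul_cancel₀ (hznorm n).ne'
  obtain ⟨vL, hvLmem, θ, hθmono, hθlim⟩ := (isCompact_sphere (0:E) 1).tendsto_subseq hvs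
  have hφv : c ≤ φ vL := by
    have hterm : ∀ n, c ≤ φ (v n) := by
      intro n
      have h1 : φ (v n) = ‖z n - ξ‖⁻¹ * (φ (z n) - cst) := by
        rw [hv]
        simp only [map_smul, map_sub, smul_eq_mul, hφξ]
      have h2 : φ (v n) - c = ‖z n - ξ‖⁻¹ * ((φ (z n) - cst) - c * ‖z n - ξ‖) := by
        rw [h1]
        field_simp [(hznorm n).ne']
      have h3 : (0:ℝ) ≤ φ (v n) - c := by
        rw [h2]
        apply mul_nonneg (inv_nonneg.mpr (norm_nonneg _))
        linarith [hzlow n]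
      linarith
    have htend : Tendsto (fun n => φ (v (θ n))) atTop (nhds (φ vL)) :=
      (hφcont.tendsto vL).comp hθlim
    exact ge_of_tendsto htend (Eventually.of_forall (fun n => hterm (θ n)))
  have hφvpos : (0:ℝ) < φ vL := lt_of_lt_of_le hc hφv
  by_cases hray : ∃ t : ℝ, 0 < t ∧ ξ + t • vL ∈ Ω
  · -- there's a point of Ω on the ray; conclude z (θ n) ∈ Ω for large n, contradiction
    obtain ⟨t₀, ht₀, hxstar⟩ := hray
    obtain ⟨ε, hε, hball⟩ := Metric.isOpen_iff.mp hop _ hxstar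
    have hzθ : Tendsto (fun n => z (θ n)) atTop (nhds ξ) :=
      hzlim.comp hθmono.tendsto_atTop
    have hE1 : ∀ᶠ n in atTop, v (θ n) ∈ ball vL (ε/t₀) :=
      hθlim.eventually (ball_mem_nhds vL (div_pos hε ht₀))
    have hE2 : ∀ᶠ n in atTop, z (θ n) ∈ ball ξ t₀ :=
      hzθ.eventually (ball_mem_nhds ξ ht₀)
    obtain ⟨n, hn1, hn2⟩ := (hE1.and hE2).exists
    set ρ := ‖z (θ n) - ξ‖ with hρ
    have hρpos : 0 < ρ := hznorm (θ n)
    have hρlt : ρ < t₀ := by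
      have := mem_ball_iff_norm.mp hn2
      rwa [hρ]
    have hpt : ξ + t₀ • v (θ n) ∈ Ω := by
      apply hball
      rw [mem_ball, dist_eq_norm]
      have : ξ + t₀ • v (θ n) - (ξ + t₀ • vL) = t₀ • (v (θ n) - vL) := by module
      rw [this, norm_smul, Real.norm_eq_abs, abs_of_pos ht₀]
      have hd := mem_ball_iff_norm.mp hn1
      calc t₀ * ‖v (θ n) - vL‖ < t₀ * (ε/t₀) := by
            apply mul_lt_mul_of_pos_left hd ht₀
        _ = ε := by field_simp
    have hlampos : 0 < ρ / t₀ := div_pos hρpos ht₀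
    have hlamlt : ρ / t₀ < 1 := (div_lt_one ht₀).mpr hρlt
    have hcombo := hconv.combo_interior_closure_mem_interior
      (by rw [hop.interior_eq]; exact hpt) hξcl hlampos
      (by linarith : (0:ℝ) ≤ 1 - ρ/t₀) (by ring)
    have hv1 : ρ • v (θ n) = z (θ n) - ξ := by
      rw [hv]
      simp only
      rw [smul_smul, hρ, mul_inv_cancel₀ (hznorm (θ n)).ne', one_smul]
    have hzeq : (ρ/t₀) • (ξ + t₀ • v (θ n)) + (1 - ρ/t₀) • ξ = z (θ n) := by
      have h5 : (ρ/t₀) • (ξ + t₀ • v (θ n)) + (1 - ρ/t₀) • ξ = ξ + ρ • v (θ n) := by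
        match_scalars <;> (field_simp; try rw [← hρ]; try ring)
      rw [h5, hv1]
      abel
    rw [hzeq, hop.interior_eq] at hcombo
    exact (hzf (θ n)).2 (by rwa [hop.interior_eq])
  · -- the ray misses Ω : separating functional gives a second supporting hyperplane
    push_neg at hray
    set R : Set E := (fun t : ℝ => ξ + t • vL) '' (Set.Ici 0) with hR
    have hRconv : Convex ℝ R := by
      rintro _ ⟨t1, ht1, rfl⟩ _ ⟨t2, ht2, rfl⟩ α β hα hβ hαβ
      refine ⟨α * t1 + β * t2, Set.mem_Ici.mpr (add_nonneg (mul_nonneg hα (Set.mem_Ici.mp ht1)) (mul_nonneg hβ (Set.mem_Ici.mp ht2))), ?_⟩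
      match_scalars
      · linarith
      · ring
    have hdisj : Disjoint Ω R := by
      rw [Set.disjoint_right]
      rintro _ ⟨t, ht, rfl⟩ hΩ
      rcases eq_or_lt_of_le (Set.mem_Ici.mp ht) with h | h
      · apply hξnΩ
        rw [← h] at hΩ
        simpa using hΩ
      · exact hray t h hΩ
    obtain ⟨fc, u, hfu, hub⟩ := geometric_hahn_banach_open hconv hop hRconv hdisj
    have hfξle : fc ξ ≤ u := by
      have hsub : closure Ω ⊆ {y : E | fc y ≤ u} :=
        closure_minimal (fun y hy => (hfu y hy).le)
          (isClosed_le fc.continuous continuous_const)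
      exact hsub hξcl
    have hfξge : u ≤ fc ξ := by
      have : ξ ∈ R := ⟨0, Set.self_mem_Ici, by simp⟩
      exact hub ξ this
    have hfξ : fc ξ = u := le_antisymm hfξle hfξge
    have hfv : 0 ≤ fc vL := by
      have h1 : ξ + (1:ℝ) • vL ∈ R := ⟨1, by norm_num, rfl⟩
      have h2 := hub _ h1
      rw [one_smul, map_add, hfξ] at h2
      linarith
    have hfx₀ : fc x₀ < u := hfu x₀ hx₀
    have hfne : (fc : E →ₗ[ℝ] ℝ) ≠ 0 := by
      intro h0
      have h1 : fc x₀ = 0 := by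
        have := LinearMap.congr_fun h0 x₀
        simpa using this
      have h2 : fc ξ = 0 := by
        have := LinearMap.congr_fun h0 ξ
        simpa using this
      rw [h2] at hfξ
      rw [h1, ← hfξ] at hfx₀
      exact lt_irrefl _ hfx₀
    have hH' : IsAffineHyperplane {y : E | fc y = u} := ⟨fc, u, hfne, rfl⟩
    have hinter : {y : E | fc y = u} ∩ Ω = ∅ := by
      rw [Set.eq_empty_iff_forall_notMem]
      rintro y ⟨hy1, hy2⟩
      exact (hfu y hy2).ne hy1
    have hseteq := huniq _ hH' hfξ hinter
    -- construct the contradiction point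
    have hx₀pos : (0:ℝ) < φ x₀ - cst := by linarith [hpos x₀ hx₀]
    set α : ℝ := -(φ vL) / (φ x₀ - cst) with hα
    have hαneg : α < 0 := div_neg_of_neg_of_pos (by linarith) hx₀pos
    set ystar : E := ξ + α • (x₀ - ξ) + vL with hystar
    have hyφ : φ ystar = cst := by
      rw [hystar]
      simp only [map_add, map_smul, map_sub, smul_eq_mul, hφξ]
      rw [hα]
      field_simp
      try ring
    have hymem : ystar ∈ {y : E | fc y = u} := by
      rw [hseteq]
      exact hyφ
    have hyf : fc ystar = u := hymem
    have hcontra : u < fc ystar := by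
      rw [hystar]
      simp only [map_add, map_smul, map_sub, smul_eq_mul, hfξ]
      have h1 : 0 < α * (fc x₀ - u) := mul_pos_of_neg_of_neg hαneg (by linarith)
      linarith
    rw [hyf] at hcontra
    exact lt_irrefl _ hcontra


lemma keyEst (Ω : Set E) (ξ : E)
    (φ : E →ₗ[ℝ] ℝ) (cst : ℝ) (hφξ : φ ξ = cst)
    (hflat : ∀ c : ℝ, 0 < c → ∀ z : ℕ → E, (∀ n, z n ∈ frontier Ω) →
      Tendsto z atTop (nhds ξ) → (∀ n, z n ≠ ξ) →
      (∀ n, c * ‖z n - ξ‖ ≤ φ (z n) - cst) → False)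
    (w₁ w₂ : E) (hw₁ : w₁ ≠ 0)
    (β₁ β₂ : ℝ) (hβ₁pos : 0 < β₁) (hβ₁ : φ w₁ = β₁) (hβ₂ : φ w₂ = β₂)
    (σ₁ σ₂ : ℝ → ℝ) (hσ₁pos : ∀ t, 0 < σ₁ t) (hσ₂pos : ∀ t, 0 < σ₂ t)
    (hσ₁0 : Tendsto σ₁ atTop (nhds 0)) (hσ₂0 : Tendsto σ₂ atTop (nhds 0))
    (Γ : ℝ) (hΓ0 : 0 ≤ Γ) (hΓ : ∀ t, σ₂ t ≤ Γ * σ₁ t)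
    (hid : ∀ t, σ₁ t * β₁ - σ₂ t * β₂ = (β₁ - β₂) * (σ₁ t * σ₂ t))
    (s : ℝ → ℝ) (hs : ∀ t, 0 < s t)
    (a : ℝ → E) (haf : ∀ t, a t ∈ frontier Ω)
    (hae : ∀ t, a t = (ξ + σ₁ t • w₁) + s t • (σ₁ t • w₁ - σ₂ t • w₂)) :
    Tendsto s atTop atTop := by
  classical
  rw [Filter.tendsto_atTop]
  by_contra hcon
  push_neg at hcon
  obtain ⟨M₀, hM₀⟩ := hcon
  set M₁ : ℝ := max M₀ 1 with hM₁def
  have hM₁pos : (0:ℝ) < M₁ := lt_of_lt_of_le one_pos (le_max_right _ _)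
  set δ : ℝ := β₁ / (2 * (M₁ * |β₁ - β₂| + 1)) with hδdef
  have hδpos : 0 < δ := by positivity
  have hev : ∀ᶠ t in atTop, σ₂ t < δ := hσ₂0.eventually (eventually_lt_nhds hδpos)
  obtain ⟨T₀, hT₀⟩ := eventually_atTop.mp hev
  have hfreq := frequently_atTop.mp hM₀
  have hex : ∀ n : ℕ, ∃ t : ℝ, max (n:ℝ) T₀ ≤ t ∧ s t < M₁ := by
    intro n
    obtain ⟨t, ht, hst⟩ := hfreq (max (n:ℝ) T₀)
    refine ⟨t, ht, lt_of_lt_of_le hst (le_max_left _ _)⟩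
  choose τ hτ₁ hτ₂ using hex
  have hτT₀ : ∀ n, T₀ ≤ τ n := fun n => le_trans (le_max_right _ _) (hτ₁ n)
  have hτtop : Tendsto τ atTop atTop :=
    tendsto_atTop_mono (fun n => le_trans (le_max_left _ _) (hτ₁ n))
      tendsto_natCast_atTop_atTop
  set z : ℕ → E := fun n => a (τ n) with hz
  set Λ : ℝ := ‖w₁‖ * (1 + M₁) + M₁ * Γ * ‖w₂‖ with hΛdef
  have hw₁pos : (0:ℝ) < ‖w₁‖ := norm_pos_iff.mpr hw₁
  have hΛpos : 0 < Λ := by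
    have h1 : 0 < ‖w₁‖ * (1 + M₁) := by positivity
    have h2 : 0 ≤ M₁ * Γ * ‖w₂‖ := by positivity
    linarith
  -- lower bound on the height of z n
  have hheight : ∀ n, σ₁ (τ n) * (β₁/2) ≤ φ (z n) - cst := by
    intro n
    have hφz : φ (z n) - cst = σ₁ (τ n) * β₁ + s (τ n) * ((β₁ - β₂) * (σ₁ (τ n) * σ₂ (τ n))) := by
      rw [hz]
      simp only
      rw [hae (τ n)]
      simp only [map_add, map_smul, map_sub, smul_eq_mul, hβ₁, hβ₂, hφξ]
      rw [← hid (τ n)]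
      ring
    have hσδ : σ₂ (τ n) < δ := hT₀ (τ n) (hτT₀ n)
    have hb1 : s (τ n) * ((β₁ - β₂) * (σ₁ (τ n) * σ₂ (τ n)))
        ≥ -(M₁ * |β₁ - β₂| * (σ₁ (τ n) * δ)) := by
      nlinarith [mul_le_mul_of_nonneg_left
          (mul_le_mul (hτ₂ n).le hσδ.le (hσ₂pos (τ n)).le hM₁pos.le)
          (mul_nonneg (abs_nonneg (β₁-β₂)) (hσ₁pos (τ n)).le),
        mul_le_mul_of_nonneg_left
          (mul_le_mul_of_nonneg_right (neg_abs_le (β₁-β₂))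
            (mul_nonneg (hσ₁pos (τ n)).le (hσ₂pos (τ n)).le)) (hs (τ n)).le]
    have hsmall : M₁ * |β₁ - β₂| * δ ≤ β₁ / 2 := by
      have hden : (0:ℝ) < 2*(M₁*|β₁ - β₂|+1) := by positivity
      rw [hδdef, ← mul_div_assoc, div_le_div_iff₀ hden two_pos]
      nlinarith [mul_nonneg (mul_nonneg hM₁pos.le (abs_nonneg (β₁ - β₂))) hβ₁pos.le]
    rw [hφz]
    have hmul := mul_le_mul_of_nonneg_left hsmall (hσ₁pos (τ n)).le
    nlinarith [hb1, hmul]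
  -- norm bound
  have hnorm : ∀ n, ‖z n - ξ‖ ≤ σ₁ (τ n) * Λ := by
    intro n
    have h1 : z n - ξ = σ₁ (τ n) • w₁ + s (τ n) • (σ₁ (τ n) • w₁ - σ₂ (τ n) • w₂) := by
      rw [hz]; simp only; rw [hae (τ n)]; abel
    rw [h1]
    have h2 : ‖σ₁ (τ n) • w₁ + s (τ n) • (σ₁ (τ n) • w₁ - σ₂ (τ n) • w₂)‖
        ≤ σ₁ (τ n) * ‖w₁‖ + s (τ n) * (σ₁ (τ n) * ‖w₁‖ + σ₂ (τ n) * ‖w₂‖) := by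
      calc ‖σ₁ (τ n) • w₁ + s (τ n) • (σ₁ (τ n) • w₁ - σ₂ (τ n) • w₂)‖
          ≤ ‖σ₁ (τ n) • w₁‖ + ‖s (τ n) • (σ₁ (τ n) • w₁ - σ₂ (τ n) • w₂)‖ := norm_add_le _ _
        _ ≤ σ₁ (τ n) * ‖w₁‖ + s (τ n) * (σ₁ (τ n) * ‖w₁‖ + σ₂ (τ n) * ‖w₂‖) := by
            rw [norm_smul, norm_smul, Real.norm_eq_abs, Real.norm_eq_abs,
              abs_of_pos (hσ₁pos (τ n)), abs_of_pos (hs (τ n))]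
            have h3 : ‖σ₁ (τ n) • w₁ - σ₂ (τ n) • w₂‖ ≤ σ₁ (τ n) * ‖w₁‖ + σ₂ (τ n) * ‖w₂‖ := by
              calc ‖σ₁ (τ n) • w₁ - σ₂ (τ n) • w₂‖
                  ≤ ‖σ₁ (τ n) • w₁‖ + ‖σ₂ (τ n) • w₂‖ := norm_sub_le _ _
                _ = σ₁ (τ n) * ‖w₁‖ + σ₂ (τ n) * ‖w₂‖ := by
                    rw [norm_smul, norm_smul, Real.norm_eq_abs, Real.norm_eq_abs,
                      abs_of_pos (hσ₁pos (τ n)), abs_of_pos (hσ₂pos (τ n))]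
            nlinarith [hs (τ n), h3]
    refine le_trans h2 ?_
    have hΓn := hΓ (τ n)
    have h4 : s (τ n) * σ₂ (τ n) ≤ M₁ * (Γ * σ₁ (τ n)) :=
      mul_le_mul (hτ₂ n).le hΓn (hσ₂pos (τ n)).le hM₁pos.le
    have h5 : s (τ n) * σ₁ (τ n) ≤ M₁ * σ₁ (τ n) :=
      mul_le_mul_of_nonneg_right (hτ₂ n).le (hσ₁pos (τ n)).le
    rw [hΛdef]
    nlinarith [mul_le_mul_of_nonneg_right h4 (norm_nonneg w₂),
      mul_le_mul_of_nonneg_right h5 (norm_nonneg w₁)]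
  -- z n tends to ξ
  have hzlim : Tendsto z atTop (nhds ξ) := by
    rw [tendsto_iff_norm_sub_tendsto_zero]
    apply squeeze_zero (fun n => norm_nonneg _) hnorm
    have := (hσ₁0.comp hτtop).mul_const Λ
    simpa using this
  have hzne : ∀ n, z n ≠ ξ := by
    intro n h
    have h1 := hheight n
    rw [h, hφξ] at h1
    nlinarith [hσ₁pos (τ n), hβ₁pos]
  have hcc : (0:ℝ) < β₁ / (2*Λ) := by positivity
  apply hflat (β₁/(2*Λ)) hcc z (fun n => haf (τ n)) hzlim hzne
  intro n
  have h1 := hnorm n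
  have h2 := hheight n
  have h3 : β₁/(2*Λ) * ‖z n - ξ‖ ≤ β₁/(2*Λ) * (σ₁ (τ n) * Λ) :=
    mul_le_mul_of_nonneg_left h1 (by positivity)
  have h4 : β₁/(2*Λ) * (σ₁ (τ n) * Λ) = σ₁ (τ n) * (β₁/2) := by
    field_simp
  linarith [h3, h4 ▸ h3]

end Aux

theorem prop_5_1_2 {E : Type*} [NormedAddCommGroup E] [NormedSpace ℝ E]
    [FiniteDimensional ℝ E]
    (Ω : Set E) (hne : Ω.Nonempty) (hbd : Bornology.IsBounded Ω)
    (hop : IsOpen Ω) (hconv : Convex ℝ Ω)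
    (d : E → E → ℝ)
    (hd0 : ∀ x ∈ Ω, d x x = 0)
    (hd : ∀ x ∈ Ω, ∀ y ∈ Ω, x ≠ y → ∀ a ∈ frontier Ω, ∀ b ∈ frontier Ω,
      (∃ s > (0 : ℝ), a = x + s • (x - y)) → (∃ t > (0 : ℝ), b = y + t • (y - x)) →
      d x y = (1 / 2) * Real.log ((‖y - a‖ * ‖x - b‖) / (‖x - a‖ * ‖y - b‖)))
    (c₁ c₂ : ℝ → E)
    (hc₁Ω : ∀ t : ℝ, c₁ t ∈ Ω) (hc₂Ω : ∀ t : ℝ, c₂ t ∈ Ω)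
    (hline₁ : ∃ p q : E, ∀ t : ℝ, ∃ r : ℝ, c₁ t = p + r • q)
    (hline₂ : ∃ p q : E, ∀ t : ℝ, ∃ r : ℝ, c₂ t = p + r • q)
    (hgeo₁ : ∀ s t : ℝ, d (c₁ s) (c₁ t) = |s - t|)
    (hgeo₂ : ∀ s t : ℝ, d (c₂ s) (c₂ t) = |s - t|)
    (ξ : E) (hξ : ξ ∈ frontier Ω)
    (hlim₁ : Tendsto c₁ atTop (nhds ξ)) (hlim₂ : Tendsto c₂ atTop (nhds ξ))
    (a₁ a₂ : E) (ha : a₁ ≠ a₂)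
    (hlim₁' : Tendsto c₁ atBot (nhds a₁)) (hlim₂' : Tendsto c₂ atBot (nhds a₂))
    (h0 : c₁ 0 ≠ c₂ 0)
    (H : Set E) (hH : IsAffineHyperplane H) (hξH : ξ ∈ H) (hHΩ : H ∩ Ω = ∅)
    (huniq : ∀ H' : Set E, IsAffineHyperplane H' → ξ ∈ H' → H' ∩ Ω = ∅ → H' = H)
    (p : E) (hpH : p ∈ H)
    (hp₁ : ∃ r : ℝ, p = a₁ + r • (a₂ - a₁))
    (hp₂ : ∃ r : ℝ, p = c₁ 0 + r • (c₂ 0 - c₁ 0)) :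
    Tendsto (fun t : ℝ => d (c₁ t) (c₂ t)) atTop (nhds 0) := by
  classical
  obtain ⟨x₀, hx₀⟩ := hne
  -- Step 1 : sign-normalized supporting functional
  obtain ⟨φ, cst, hpos, hHset⟩ :
      ∃ (φ : E →ₗ[ℝ] ℝ) (cst : ℝ), (∀ z ∈ Ω, cst < φ z) ∧ H = {y : E | φ y = cst} := by
    obtain ⟨φ₀, cst₀, hφ₀, hH₀⟩ := hH
    have hnever : ∀ z ∈ Ω, φ₀ z ≠ cst₀ := by
      intro z hz h
      rw [Set.eq_empty_iff_forall_notMem] at hHΩ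
      exact hHΩ z ⟨by rw [hH₀]; exact h, hz⟩
    have hdico : (∀ z ∈ Ω, cst₀ < φ₀ z) ∨ (∀ z ∈ Ω, φ₀ z < cst₀) := by
      by_contra hcon
      push_neg at hcon
      obtain ⟨⟨z₁, hz₁, hle₁⟩, ⟨z₂, hz₂, hle₂⟩⟩ := hcon
      have h1 : φ₀ z₁ < cst₀ := lt_of_le_of_ne hle₁ (hnever z₁ hz₁)
      have h2 : cst₀ < φ₀ z₂ := lt_of_le_of_ne hle₂ (Ne.symm (hnever z₂ hz₂))
      set θc : ℝ := (cst₀ - φ₀ z₁)/(φ₀ z₂ - φ₀ z₁) with hθc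
      have hd21 : (0:ℝ) < φ₀ z₂ - φ₀ z₁ := by linarith
      have hθpos : 0 < θc := div_pos (by linarith) hd21
      have hθlt : θc < 1 := by rw [hθc, div_lt_one hd21]; linarith
      have hmem := hconv hz₁ hz₂ (by linarith : (0:ℝ) ≤ 1 - θc) hθpos.le (by ring)
      apply hnever _ hmem
      simp only [map_add, map_smul, smul_eq_mul]
      rw [hθc]
      field_simp
      ring
    rcases hdico with hcase | hcase
    · exact ⟨φ₀, cst₀, hcase, hH₀⟩
    · refine ⟨-φ₀, -cst₀, fun z hz => by simpa using (hcase z hz), ?_⟩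
      rw [hH₀]
      ext y
      simp [neg_eq_iff_eq_neg]
  have hφξ : φ ξ = cst := by
    have : ξ ∈ {y : E | φ y = cst} := hHset ▸ hξH
    exact this
  have hφp : φ p = cst := by
    have : p ∈ {y : E | φ y = cst} := hHset ▸ hpH
    exact this
  have hnotΩ : ∀ z ∈ frontier Ω, z ∉ Ω := by
    intro z hz h
    exact hz.2 (by rwa [hop.interior_eq])
  have hξnΩ : ξ ∉ Ω := hnotΩ ξ hξ
  -- Step 2 : chord parametrizations
  obtain ⟨C₁, hC₁, ha₁f, ha₁ne, hseg₁, hpar₁⟩ :=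
    chordLemma Ω hbd hop hconv d hd0 hd c₁ hc₁Ω hline₁ hgeo₁ ξ a₁ hlim₁ hlim₁'
  obtain ⟨C₂, hC₂, ha₂f, ha₂ne, hseg₂, hpar₂⟩ :=
    chordLemma Ω hbd hop hconv d hd0 hd c₂ hc₂Ω hline₂ hgeo₂ ξ a₂ hlim₂ hlim₂'
  set w₁ : E := a₁ - ξ with hw₁def
  set w₂ : E := a₂ - ξ with hw₂def
  have hw₁ne : w₁ ≠ 0 := sub_ne_zero.mpr ha₁ne
  have hw₂ne : w₂ ≠ 0 := sub_ne_zero.mpr ha₂ne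
  have ha₁eq : ξ + w₁ = a₁ := by rw [hw₁def]; abel
  have ha₂eq : ξ + w₂ = a₂ := by rw [hw₂def]; abel
  -- Step 3 : linear independence of w₁, w₂
  have hindep : ∀ A B : ℝ, A • w₁ + B • w₂ = 0 → A = 0 ∧ B = 0 := by
    intro A B hAB
    by_cases hB : B = 0
    · subst hB
      rw [zero_smul, add_zero] at hAB
      rcases smul_eq_zero.mp hAB with h | h
      · exact ⟨h, rfl⟩
      · exact absurd h hw₁ne
    · exfalso
      set μ : ℝ := -A/B with hμ
      have hw2 : w₂ = μ • w₁ := by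
        have h1 : B • w₂ = (-A) • w₁ := by
          have h := hAB
          rw [add_comm, add_eq_zero_iff_eq_neg, ← neg_smul] at h
          exact h
        calc w₂ = B⁻¹ • (B • w₂) := by rw [smul_smul, inv_mul_cancel₀ hB, one_smul]
          _ = B⁻¹ • ((-A) • w₁) := by rw [h1]
          _ = μ • w₁ := by
              rw [smul_smul, hμ]
              congr 1
              rw [mul_comm, ← div_eq_mul_inv]
      rcases lt_trichotomy μ 0 with hμ0 | hμ0 | hμ0
      · set tt : ℝ := -μ/(1-μ) with htt
        have h1μ : (0:ℝ) < 1 - μ := by linarith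
        have htpos : 0 < tt := div_pos (by linarith) h1μ
        have htlt : tt < 1 := by rw [htt, div_lt_one h1μ]; linarith
        have hx : ξ + (1/2 : ℝ) • w₁ ∈ Ω := hseg₁ (1/2) ⟨by norm_num, by norm_num⟩
        have hy : ξ + (1/2 : ℝ) • w₂ ∈ Ω := hseg₂ (1/2) ⟨by norm_num, by norm_num⟩
        have hmem := hconv hx hy htpos.le (by linarith : (0:ℝ) ≤ 1 - tt) (by ring)
        have heq : tt • (ξ + (1/2:ℝ) • w₁) + (1-tt) • (ξ + (1/2:ℝ) • w₂) = ξ := by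
          rw [hw2]
          match_scalars <;> (rw [htt]; field_simp; try ring)
        rw [heq] at hmem
        exact hξnΩ hmem
      · apply hw₂ne
        rw [hw2, hμ0, zero_smul]
      · rcases lt_trichotomy μ 1 with h1 | h1 | h1
        · have hmem := hseg₁ μ ⟨hμ0, h1⟩
          have heq : ξ + μ • w₁ = a₂ := by rw [← hw2]; exact ha₂eq
          rw [heq] at hmem
          exact hnotΩ a₂ ha₂f hmem
        · apply ha
          have h2 : w₂ = w₁ := by rw [hw2, h1, one_smul]
          rw [← ha₁eq, ← ha₂eq, h2]
        · have hμpos : (0:ℝ) < μ := by linarith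
          have hmem := hseg₂ μ⁻¹ ⟨inv_pos.mpr hμpos, inv_lt_one_of_one_lt₀ h1⟩
          have heq : ξ + μ⁻¹ • w₂ = a₁ := by
            rw [hw2, smul_smul, inv_mul_cancel₀ hμpos.ne', one_smul]
            exact ha₁eq
          rw [heq] at hmem
          exact hnotΩ a₁ ha₁f hmem
  -- Step 4 : positivity of the heights
  have hβ₁pos : 0 < φ w₁ := by
    have hmem : ξ + (1/2 : ℝ) • w₁ ∈ Ω := hseg₁ (1/2) ⟨by norm_num, by norm_num⟩
    have := hpos _ hmem
    simp only [map_add, map_smul, smul_eq_mul, hφξ] at this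
    linarith
  have hβ₂pos : 0 < φ w₂ := by
    have hmem : ξ + (1/2 : ℝ) • w₂ ∈ Ω := hseg₂ (1/2) ⟨by norm_num, by norm_num⟩
    have := hpos _ hmem
    simp only [map_add, map_smul, smul_eq_mul, hφξ] at this
    linarith
  -- Step 5 : derive the key relation  φ w₁ * C₂ = φ w₂ * C₁
  obtain ⟨r, hr⟩ := hp₁
  obtain ⟨r', hr'⟩ := hp₂
  have hp1eq : p - ξ = (1-r) • w₁ + r • w₂ := by
    rw [hr, hw₁def, hw₂def]
    module
  have hp2eq : p - ξ = ((1-r') * (1 + C₁ * Real.exp (2*0))⁻¹) • w₁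
      + (r' * (1 + C₂ * Real.exp (2*0))⁻¹) • w₂ := by
    rw [hr', hpar₁ 0, hpar₂ 0]
    module
  have hdiff : ((1-r) - (1-r') * (1 + C₁ * Real.exp (2*0))⁻¹) • w₁
      + (r - r' * (1 + C₂ * Real.exp (2*0))⁻¹) • w₂ = 0 := by
    have h := hp1eq.symm.trans hp2eq
    have h2 : ((1-r) - (1-r') * (1 + C₁ * Real.exp (2*0))⁻¹) • w₁
        + (r - r' * (1 + C₂ * Real.exp (2*0))⁻¹) • w₂
        = ((1-r) • w₁ + r • w₂)
          - (((1-r') * (1 + C₁ * Real.exp (2*0))⁻¹) • w₁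
            + (r' * (1 + C₂ * Real.exp (2*0))⁻¹) • w₂) := by module
    rw [h2, h, sub_self]
  obtain ⟨e1, e2⟩ := hindep _ _ hdiff
  have hE0 : Real.exp (2*(0:ℝ)) = 1 := by norm_num
  have hp1pos : (0:ℝ) < 1 + C₁ * Real.exp (2*(0:ℝ)) := by
    have := Real.exp_pos (2*(0:ℝ)); positivity
  have hp2pos : (0:ℝ) < 1 + C₂ * Real.exp (2*(0:ℝ)) := by
    have := Real.exp_pos (2*(0:ℝ)); positivity
  have f1 : (1-r) * (1 + C₁ * Real.exp (2*(0:ℝ))) = 1-r' := by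
    rw [sub_eq_zero] at e1
    rw [e1]
    field_simp
  have f2 : r * (1 + C₂ * Real.exp (2*(0:ℝ))) = r' := by
    rw [sub_eq_zero] at e2
    rw [e2]
    field_simp
  have heqφ : (1-r) * φ w₁ + r * φ w₂ = 0 := by
    have h1 : φ (p - ξ) = (1-r) * φ w₁ + r * φ w₂ := by
      rw [hp1eq]
      simp [map_add, map_smul, smul_eq_mul]
    have h2 : φ (p - ξ) = 0 := by
      rw [map_sub, hφp, hφξ, sub_self]
    linarith [h1, h2]
  have hCrel : (1-r) * C₁ + r * C₂ = 0 := by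
    rw [hE0] at f1 f2
    linarith [f1, f2]
  have hr0 : r ≠ 0 := by
    intro h
    rw [h] at heqφ
    simp at heqφ
    linarith
  have hkey : φ w₁ * C₂ = φ w₂ * C₁ := by
    have h5 : r * (φ w₂ * C₁ - φ w₁ * C₂) = 0 := by
      linear_combination C₁ * heqφ - (φ w₁) * hCrel
    rcases mul_eq_zero.mp h5 with h | h
    · exact absurd h hr0
    · linarith [sub_eq_zero.mp h]
  -- Step 6 : the flatness statement
  have hflat : ∀ c : ℝ, 0 < c → ∀ z : ℕ → E, (∀ n, z n ∈ frontier Ω) →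
      Tendsto z atTop (nhds ξ) → (∀ n, z n ≠ ξ) →
      (∀ n, c * ‖z n - ξ‖ ≤ φ (z n) - cst) → False := by
    intro c hc z h1 h2 h3 h4
    exact flatLemma Ω hop hconv x₀ hx₀ φ cst hpos ξ hξ hφξ
      (fun H' hH' hξH' hH'Ω => (huniq H' hH' hξH' hH'Ω).trans hHset) c hc z h1 h2 h3 h4
  -- Step 7 : per-time chord data
  have hxyne : ∀ t, c₁ t ≠ c₂ t := by
    intro t h
    have h2 : ((1 + C₁ * Real.exp (2*t))⁻¹) • w₁
        + (-(1 + C₂ * Real.exp (2*t))⁻¹) • w₂ = 0 := by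
      have h3 := h
      rw [hpar₁ t, hpar₂ t] at h3
      have h4 : ((1 + C₁ * Real.exp (2*t))⁻¹) • w₁
          + (-(1 + C₂ * Real.exp (2*t))⁻¹) • w₂
          = (ξ + (1 + C₁ * Real.exp (2*t))⁻¹ • w₁)
            - (ξ + (1 + C₂ * Real.exp (2*t))⁻¹ • w₂) := by module
      rw [h4, h3, sub_self]
    have := (hindep _ _ h2).1
    exact absurd this (sigma_pos C₁ hC₁ t).ne'
  have hstrA : ∀ t, ∃ sa : ℝ, 0 < sa ∧ c₁ t + sa • (c₁ t - c₂ t) ∈ frontier Ω := by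
    intro t
    obtain ⟨m, M, hm, hM, hIff, hmf, hMf⟩ := lineStruct Ω hbd hop hconv (c₁ t) (hc₁Ω t)
      (c₁ t - c₂ t) (sub_ne_zero.mpr (hxyne t))
    exact ⟨M, hM, hMf⟩
  have hstrB : ∀ t, ∃ sb : ℝ, 0 < sb ∧ c₂ t + sb • (c₂ t - c₁ t) ∈ frontier Ω := by
    intro t
    obtain ⟨m, M, hm, hM, hIff, hmf, hMf⟩ := lineStruct Ω hbd hop hconv (c₂ t) (hc₂Ω t)
      (c₂ t - c₁ t) (sub_ne_zero.mpr (Ne.symm (hxyne t)))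
    exact ⟨M, hM, hMf⟩
  choose sa hsa hsaf using hstrA
  choose sb hsb hsbf using hstrB
  have hform : ∀ t, d (c₁ t) (c₂ t)
      = (1/2) * Real.log ((1 + sa t)*(1 + sb t)/((sa t)*(sb t))) := by
    intro t
    exact dformula Ω d hd (hc₁Ω t) (hc₂Ω t) (hxyne t) (hsa t) (hsb t) (hsaf t) (hsbf t)
  -- Step 8 : σ identities and comparison
  have hidAB : ∀ t, (1 + C₁ * Real.exp (2*t))⁻¹ * φ w₁ - (1 + C₂ * Real.exp (2*t))⁻¹ * φ w₂
      = (φ w₁ - φ w₂) * ((1 + C₁ * Real.exp (2*t))⁻¹ * (1 + C₂ * Real.exp (2*t))⁻¹) := by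
    intro t
    have h1 : (0:ℝ) < 1 + C₁ * Real.exp (2*t) := by
      have := Real.exp_pos (2*t); positivity
    have h2 : (0:ℝ) < 1 + C₂ * Real.exp (2*t) := by
      have := Real.exp_pos (2*t); positivity
    field_simp
    linear_combination (Real.exp (2*t)) * hkey
  have hGam : ∀ (Ca Cb : ℝ), 0 < Ca → 0 < Cb → ∀ t,
      (1 + Cb * Real.exp (2*t))⁻¹ ≤ (max 1 (Ca/Cb)) * (1 + Ca * Real.exp (2*t))⁻¹ := by
    intro Ca Cb hCa hCb t
    have h1 : (0:ℝ) < 1 + Ca * Real.exp (2*t) := by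
      have := Real.exp_pos (2*t); positivity
    have h2 : (0:ℝ) < 1 + Cb * Real.exp (2*t) := by
      have := Real.exp_pos (2*t); positivity
    have hΓ1 : (1:ℝ) ≤ max 1 (Ca/Cb) := le_max_left _ _
    have hΓC : Ca ≤ (max 1 (Ca/Cb)) * Cb := by
      rw [← div_le_iff₀ hCb]
      exact le_max_right _ _
    have hrw1 : (max 1 (Ca/Cb)) * (1 + Ca * Real.exp (2*t))⁻¹
        = (max 1 (Ca/Cb)) / (1 + Ca * Real.exp (2*t)) := (div_eq_mul_inv _ _).symm
    have hrw2 : (1 + Cb * Real.exp (2*t))⁻¹ = 1 / (1 + Cb * Real.exp (2*t)) := (one_div _).symm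
    rw [hrw1, hrw2, div_le_div_iff₀ h2 h1]
    have h3 := mul_le_mul_of_nonneg_right hΓC (Real.exp_pos (2*t)).le
    nlinarith [h3, hΓ1]
  -- Step 9 : the two asymptotic estimates via keyEst
  have hsatop : Tendsto sa atTop atTop := by
    apply keyEst Ω ξ φ cst hφξ hflat w₁ w₂ hw₁ne (φ w₁) (φ w₂) hβ₁pos rfl rfl
      (fun t => (1 + C₁ * Real.exp (2*t))⁻¹) (fun t => (1 + C₂ * Real.exp (2*t))⁻¹)
      (sigma_pos C₁ hC₁) (sigma_pos C₂ hC₂)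
      (sigma_tendsto C₁ hC₁) (sigma_tendsto C₂ hC₂)
      (max 1 (C₁/C₂)) (le_trans zero_le_one (le_max_left _ _)) (hGam C₁ C₂ hC₁ hC₂)
      hidAB sa hsa (fun t => c₁ t + sa t • (c₁ t - c₂ t)) hsaf
    intro t
    rw [hpar₁ t, hpar₂ t]
    module
  have hsbtop : Tendsto sb atTop atTop := by
    apply keyEst Ω ξ φ cst hφξ hflat w₂ w₁ hw₂ne (φ w₂) (φ w₁) hβ₂pos rfl rfl
      (fun t => (1 + C₂ * Real.exp (2*t))⁻¹) (fun t => (1 + C₁ * Real.exp (2*t))⁻¹)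
      (sigma_pos C₂ hC₂) (sigma_pos C₁ hC₁)
      (sigma_tendsto C₂ hC₂) (sigma_tendsto C₁ hC₁)
      (max 1 (C₂/C₁)) (le_trans zero_le_one (le_max_left _ _)) (hGam C₂ C₁ hC₂ hC₁)
      (fun t => by linear_combination -(hidAB t)) sb hsb
      (fun t => c₂ t + sb t • (c₂ t - c₁ t)) hsbf
    intro t
    rw [hpar₁ t, hpar₂ t]
    module
  -- Step 10 : conclusion
  have h1 : Tendsto (fun t => 1 + (sa t)⁻¹) atTop (nhds 1) := by
    have := hsatop.inv_tendsto_atTop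
    have h2 := tendsto_const_nhds (x := (1:ℝ)) (f := atTop (α := ℝ)) |>.add this
    simpa using h2
  have h2 : Tendsto (fun t => 1 + (sb t)⁻¹) atTop (nhds 1) := by
    have := hsbtop.inv_tendsto_atTop
    have h3 := tendsto_const_nhds (x := (1:ℝ)) (f := atTop (α := ℝ)) |>.add this
    simpa using h3
  have hprod : Tendsto (fun t => (1 + (sa t)⁻¹) * (1 + (sb t)⁻¹)) atTop (nhds 1) := by
    have := h1.mul h2
    simpa using this
  have hargeq : ∀ t, (1 + sa t)*(1 + sb t)/((sa t)*(sb t))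
      = (1 + (sa t)⁻¹) * (1 + (sb t)⁻¹) := by
    intro t
    field_simp [(hsa t).ne', (hsb t).ne']
    ring
  have hlog : Tendsto (fun t => Real.log ((1 + sa t)*(1 + sb t)/((sa t)*(sb t))))
      atTop (nhds 0) := by
    have hcomp : Tendsto (fun t => (1 + sa t)*(1 + sb t)/((sa t)*(sb t))) atTop (nhds 1) := by
      rw [tendsto_congr hargeq]
      exact hprod
    have := (Real.continuousAt_log one_ne_zero).tendsto.comp hcomp
    simpa [Function.comp_def] using this
  have hfinal := hlog.const_mul (1/2 : ℝ)
  rw [tendsto_congr hform]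
  simpa using hfinal
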